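/- Consider a reversible reaction graph on c vertices (finite edge set E, maps t, h : E → Fin c with t e ≠ h e, positive constants k⁺, k⁻ : E → ℝ, and Laplacian L as below), together with a real m×c matrix Z. Suppose x* : Fin m → ℝ is positive and detailed-balanced: for every edge e, k⁺ e * Real.exp ((Zᵀ *ᵥ log∘x*) (t e)) = k⁻ e * Real.exp ((Zᵀ *ᵥ log∘x*) (h e)). Then every positive equilibrium is detailed-balanced: if x : Fin m → ℝ is positive and Z *ᵥ (L *ᵥ (fun i => Real.exp ((Zᵀ *ᵥ log∘x) i))) = 0, then for every edge e, k⁺ e * Real.exp ((Zᵀ *ᵥ log∘x) (t e)) = k⁻ e * Real.exp ((Zᵀ *ᵥ log∘x) (h e)). -/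
import Mathlib

open Matrix

/-- The weighted Laplacian matrix of a reversible reaction graph on `c` vertices,
with edge set `E`, tail and head maps `t, h`, and forward and reverse reaction
constants `kp, km`. -/
def reactionLaplacian (c : ℕ) {E : Type*} [Fintype E]
    (t h : E → Fin c) (kp km : E → ℝ) : Matrix (Fin c) (Fin c) ℝ :=
  fun i j =>
    if i = j then
      (∑ e ∈ Finset.univ.filter (fun e => t e = j), kp e) +
        (∑ e ∈ Finset.univ.filter (fun e => h e = j), km e)
    else
      -((∑ e ∈ Finset.univ.filter (fun e => t e = j ∧ h e = i), kp e) +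
        (∑ e ∈ Finset.univ.filter (fun e => t e = i ∧ h e = j), km e))

lemma reactionLaplacian_eq_sum (c : ℕ) {E : Type*} [Fintype E]
    (t h : E → Fin c) (hth : ∀ e, t e ≠ h e) (kp km : E → ℝ) (i j : Fin c) :
    reactionLaplacian c t h kp km i j =
      ∑ e : E, (kp e * (if t e = j then 1 else 0) - km e * (if h e = j then 1 else 0)) *
        ((if t e = i then 1 else 0) - (if h e = i then 1 else 0)) := by
  unfold reactionLaplacian
  by_cases hij : i = j
  · subst hij
    simp only [if_pos rfl, Finset.sum_filter]
    rw [← Finset.sum_add_distrib]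
    refine Finset.sum_congr rfl fun e _ => ?_
    by_cases h1 : t e = i <;> by_cases h2 : h e = i <;>
      simp [h1, h2] <;> first | (exact absurd (h1.trans h2.symm) (hth e)) | ring
  · rw [if_neg hij]
    simp only [Finset.sum_filter]
    rw [← Finset.sum_add_distrib, ← Finset.sum_neg_distrib]
    refine Finset.sum_congr rfl fun e _ => ?_
    by_cases h1 : t e = j <;> by_cases h2 : h e = i <;> by_cases h3 : t e = i <;>
      by_cases h4 : h e = j <;>
      simp [h1, h2, h3, h4, hij, Ne.symm hij] <;>
      first
      | ring
      | exact absurd (h1.trans h4.symm) (hth e)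
      | exact absurd (h3.trans h2.symm) (hth e)
      | exact absurd (h3 ▸ h1 : (i:Fin c) = j) hij
      | exact absurd (h2 ▸ h4 : (i:Fin c) = j) hij

lemma dot_laplacian_mulVec (c : ℕ) {E : Type*} [Fintype E]
    (t h : E → Fin c) (hth : ∀ e, t e ≠ h e) (kp km : E → ℝ) (v y : Fin c → ℝ) :
    v ⬝ᵥ (reactionLaplacian c t h kp km *ᵥ y) =
      ∑ e : E, (kp e * y (t e) - km e * y (h e)) * (v (t e) - v (h e)) := by
  simp only [dotProduct, mulVec, dotProduct]
  have A : ∀ i : Fin c,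
      v i * ∑ j : Fin c, reactionLaplacian c t h kp km i j * y j =
      ∑ e : E, (kp e * y (t e) - km e * y (h e)) *
        ((if t e = i then 1 else 0) - (if h e = i then 1 else 0)) * v i := by
    intro i
    have hj : ∀ j ∈ Finset.univ, reactionLaplacian c t h kp km i j * y j =
        ∑ e : E, (kp e * (if t e = j then 1 else 0) - km e * (if h e = j then 1 else 0)) *
          ((if t e = i then 1 else 0) - (if h e = i then 1 else 0)) * y j := fun j _ => by
      rw [reactionLaplacian_eq_sum c t h hth kp km i j, Finset.sum_mul]
    rw [Finset.sum_congr rfl hj, Finset.sum_comm, Finset.mul_sum]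
    refine Finset.sum_congr rfl fun e _ => ?_
    have hterm : ∀ j ∈ Finset.univ,
        (kp e * (if t e = j then 1 else 0) - km e * (if h e = j then 1 else 0)) *
          ((if t e = i then 1 else 0) - (if h e = i then 1 else 0)) * y j =
        ((if t e = i then 1 else 0) - (if h e = i then 1 else 0)) *
          (kp e * ((if t e = j then 1 else 0) * y j))
        - ((if t e = i then 1 else 0) - (if h e = i then 1 else 0)) *
          (km e * ((if h e = j then 1 else 0) * y j)) := fun j _ => by ring
    rw [Finset.sum_congr rfl hterm, Finset.sum_sub_distrib, ← Finset.mul_sum, ← Finset.mul_sum,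
      ← Finset.mul_sum, ← Finset.mul_sum]
    simp only [ite_mul, one_mul, zero_mul, Finset.sum_ite_eq, Finset.mem_univ, if_pos]
    ring
  rw [Finset.sum_congr rfl (fun i _ => A i), Finset.sum_comm]
  refine Finset.sum_congr rfl fun e _ => ?_
  have hterm : ∀ i ∈ Finset.univ,
      (kp e * y (t e) - km e * y (h e)) *
        ((if t e = i then 1 else 0) - (if h e = i then 1 else 0)) * v i =
      (kp e * y (t e) - km e * y (h e)) * ((if t e = i then 1 else 0) * v i)
      - (kp e * y (t e) - km e * y (h e)) * ((if h e = i then 1 else 0) * v i) :=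
    fun i _ => by ring
  rw [Finset.sum_congr rfl hterm, Finset.sum_sub_distrib, ← Finset.mul_sum, ← Finset.mul_sum]
  simp only [ite_mul, one_mul, zero_mul, Finset.sum_ite_eq, Finset.mem_univ, if_pos]
  ring

theorem all_equilibria_detailed_balanced
    (c m : ℕ) (hc : 0 < c) (hm : 0 < m) (E : Type*) [Fintype E]
    (t h : E → Fin c) (hth : ∀ e, t e ≠ h e)
    (kp km : E → ℝ) (hkp : ∀ e, 0 < kp e) (hkm : ∀ e, 0 < km e)
    (Z : Matrix (Fin m) (Fin c) ℝ)
    (xs : Fin m → ℝ) (hxs : ∀ k, 0 < xs k)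
    (hdb : ∀ e, kp e * Real.exp ((Zᵀ *ᵥ (fun k => Real.log (xs k))) (t e)) =
      km e * Real.exp ((Zᵀ *ᵥ (fun k => Real.log (xs k))) (h e))) :
    ∀ x : Fin m → ℝ, (∀ k, 0 < x k) →
      Z *ᵥ (reactionLaplacian c t h kp km *ᵥ
        (fun i => Real.exp ((Zᵀ *ᵥ (fun k => Real.log (x k))) i))) = 0 →
      ∀ e, kp e * Real.exp ((Zᵀ *ᵥ (fun k => Real.log (x k))) (t e)) =
        km e * Real.exp ((Zᵀ *ᵥ (fun k => Real.log (x k))) (h e)) := by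
  intro x hx heq
  set μ : Fin c → ℝ := Zᵀ *ᵥ (fun k => Real.log (x k)) with hμ
  set μs : Fin c → ℝ := Zᵀ *ᵥ (fun k => Real.log (xs k)) with hμs
  set y : Fin c → ℝ := fun i => Real.exp (μ i) with hy
  set u : Fin m → ℝ := fun k => Real.log (x k) - Real.log (xs k) with hu0
  have hu : Zᵀ *ᵥ u = μ - μs := by
    have : u = (fun k => Real.log (x k)) - (fun k => Real.log (xs k)) := rfl
    rw [this, Matrix.mulVec_sub]
  have hdot : u ⬝ᵥ (Z *ᵥ (reactionLaplacian c t h kp km *ᵥ y)) = 0 := by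
    rw [heq]; simp [dotProduct]
  rw [Matrix.dotProduct_mulVec, ← Matrix.mulVec_transpose, hu,
    dot_laplacian_mulVec c t h hth kp km] at hdot
  -- rewrite each term as a nonnegative quantity
  have key : ∀ e, (kp e * y (t e) - km e * y (h e)) * ((μ - μs) (t e) - (μ - μs) (h e)) =
      (kp e * Real.exp (μs (t e))) *
        ((Real.exp (μ (t e) - μs (t e)) - Real.exp (μ (h e) - μs (h e))) *
          ((μ (t e) - μs (t e)) - (μ (h e) - μs (h e)))) := by
    intro e
    have h1 : kp e * y (t e) = kp e * Real.exp (μs (t e)) * Real.exp (μ (t e) - μs (t e)) := by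
      rw [hy]; rw [mul_assoc, ← Real.exp_add]; ring_nf
    have h2 : km e * y (h e) = kp e * Real.exp (μs (t e)) * Real.exp (μ (h e) - μs (h e)) := by
      rw [hy, hdb e]; rw [mul_assoc, ← Real.exp_add]; ring_nf
    rw [h1, h2]; simp [Pi.sub_apply]; ring
  have hnonneg : ∀ e ∈ Finset.univ, 0 ≤ (kp e * y (t e) - km e * y (h e)) *
      ((μ - μs) (t e) - (μ - μs) (h e)) := by
    intro e _
    rw [key e]
    refine mul_nonneg (le_of_lt (mul_pos (hkp e) (Real.exp_pos _))) ?_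
    rcases le_total (μ (t e) - μs (t e)) (μ (h e) - μs (h e)) with hle | hle
    · exact mul_nonneg_of_nonpos_of_nonpos (by simpa using Real.exp_le_exp.2 hle)
        (by simpa using hle)
    · exact mul_nonneg (by simpa using Real.exp_le_exp.2 hle) (by simpa using hle)
  have hzero := (Finset.sum_eq_zero_iff_of_nonneg hnonneg).1 hdot
  intro e
  have he := hzero e (Finset.mem_univ e)
  rw [key e] at he
  have hw : kp e * Real.exp (μs (t e)) ≠ 0 := ne_of_gt (mul_pos (hkp e) (Real.exp_pos _))
  have hprod : (Real.exp (μ (t e) - μs (t e)) - Real.exp (μ (h e) - μs (h e))) *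
      ((μ (t e) - μs (t e)) - (μ (h e) - μs (h e))) = 0 := by
    rcases mul_eq_zero.1 he with h' | h'
    · exact absurd h' hw
    · exact h'
  have hab : μ (t e) - μs (t e) = μ (h e) - μs (h e) := by
    by_contra hne
    rcases mul_eq_zero.1 hprod with h' | h'
    · exact hne (Real.exp_injective (by linarith [sub_eq_zero.1 h']))
    · exact hne (sub_eq_zero.1 h')
  show kp e * Real.exp (μ (t e)) = km e * Real.exp (μ (h e))
  have h1 : kp e * Real.exp (μ (t e)) =
      kp e * Real.exp (μs (t e)) * Real.exp (μ (t e) - μs (t e)) := by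
    rw [mul_assoc, ← Real.exp_add]; ring_nf
  have h2 : km e * Real.exp (μ (h e)) =
      km e * Real.exp (μs (h e)) * Real.exp (μ (h e) - μs (h e)) := by
    rw [mul_assoc, ← Real.exp_add]; ring_nf
  rw [h1, h2, hdb e, hab]
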